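/- Let f : R^m → R be differentiable and let s* ∈ R^m with ‖s*‖₀ ≤ r be an r-local maximum (or minimum) point of f, meaning there exists δ > 0 such that f(s*) ≥ f(s) (resp. f(s*) ≤ f(s)) for all s with ‖s‖₀ ≤ r and ‖s - s*‖₂ < δ. Then for every index i ∈ {1,…,m} such that |{i} ∪ supp(s*)| ≤ r, the partial derivative ∂f/∂s_i vanishes at s*. -/

import Mathlib

open Set

theorem partial_deriv_zero_at_sparse_local_extremum {m : ℕ} (r : ℕ)
    (f : (Fin m → ℝ) → ℝ) (hf : Differentiable ℝ f)
    (sstar : Fin m → ℝ) (hs : {j | sstar j ≠ 0}.ncard ≤ r)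
    (hext : ∃ δ > (0 : ℝ),
      (∀ s : Fin m → ℝ, {j | s j ≠ 0}.ncard ≤ r →
        Real.sqrt (∑ j, (s j - sstar j) ^ 2) < δ → f s ≤ f sstar) ∨
      (∀ s : Fin m → ℝ, {j | s j ≠ 0}.ncard ≤ r →
        Real.sqrt (∑ j, (s j - sstar j) ^ 2) < δ → f sstar ≤ f s)) :
    ∀ i : Fin m, (insert i {j | sstar j ≠ 0}).ncard ≤ r →
      fderiv ℝ f sstar (Pi.single i 1) = 0 := by
  intro i hi
  obtain ⟨δ, hδ, hcase⟩ := hext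
  set c : ℝ → (Fin m → ℝ) := fun t => sstar + t • (Pi.single i 1 : Fin m → ℝ) with hc
  have hc0 : c 0 = sstar := by simp [hc]
  have hderiv : HasDerivAt (fun t => f (c t)) (fderiv ℝ f sstar (Pi.single i 1)) 0 := by
    have h1 : HasDerivAt c (Pi.single i 1) 0 := by
      have h' : HasDerivAt (fun t : ℝ => t • (Pi.single i 1 : Fin m → ℝ))
          ((Pi.single i 1 : Fin m → ℝ)) 0 := by
        simpa using (hasDerivAt_id (0 : ℝ)).smul_const (Pi.single i 1 : Fin m → ℝ)
      simpa [hc] using h'.const_add sstar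
    have h2 := (hf sstar).hasFDerivAt
    rw [← hc0] at h2
    have h3 := h2.comp_hasDerivAt 0 h1
    rw [hc0] at h3
    exact h3
  have hsupp : ∀ t : ℝ, {j | c t j ≠ 0}.ncard ≤ r := by
    intro t
    refine le_trans (Set.ncard_le_ncard ?_ (Set.toFinite _)) hi
    intro j hj
    by_cases hji : j = i
    · exact Set.mem_insert_iff.mpr (Or.inl hji)
    · right
      have : c t j = sstar j := by simp [hc, Pi.single_apply, hji]
      simpa [this] using hj
  have hdist : ∀ t : ℝ, Real.sqrt (∑ j, (c t j - sstar j) ^ 2) = |t| := by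
    intro t
    have : (∑ j, (c t j - sstar j) ^ 2) = t ^ 2 := by
      have : ∀ j, (c t j - sstar j) ^ 2 = if j = i then t ^ 2 else 0 := by
        intro j
        by_cases hji : j = i <;> simp [hc, Pi.single_apply, hji]
      simp [this]
    rw [this, Real.sqrt_sq_eq_abs]
  rcases hcase with h | h
  · have hmax : IsLocalMax (fun t => f (c t)) 0 := by
      filter_upwards [Metric.ball_mem_nhds (0 : ℝ) hδ] with t ht
      have habs : |t| < δ := by simpa [Real.dist_eq] using ht
      have := h (c t) (hsupp t) (by rw [hdist]; exact habs)
      simpa [hc0] using this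
    exact hmax.hasDerivAt_eq_zero hderiv
  · have hmin : IsLocalMin (fun t => f (c t)) 0 := by
      filter_upwards [Metric.ball_mem_nhds (0 : ℝ) hδ] with t ht
      have habs : |t| < δ := by simpa [Real.dist_eq] using ht
      have := h (c t) (hsupp t) (by rw [hdist]; exact habs)
      simpa [hc0] using this
    exact hmin.hasDerivAt_eq_zero hderiv
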